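/- With 𝒯_d^{(β)} = {cos β_j : β_j = β + 2jπ/d, j=0,…,d−1} and sin(dβ) ≠ 0, the fundamental Lagrange polynomial satisfies, for x = cos t: ℓ(𝒯_d^{(β)}, cos β_j; x) = (sin β_j / (d sin dβ)) · sin(d(t+β)/2) sin(d(t−β)/2) / (sin((t+β_j)/2) sin((t−β_j)/2)), whenever the denominators are nonzero. -/

import Mathlib

open Real Finset

/-- The modified Chebyshev points of degree `d` with parameter `β`. -/
noncomputable def modCheb (d : ℕ) (β : ℝ) : Finset ℝ :=
  (Finset.range d).image (fun j : ℕ => Real.cos (β + 2 * j * π / d))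

/-- The fundamental Lagrange interpolation polynomial (as a function) at node `a`. -/
noncomputable def lagBasis (A : Finset ℝ) (a : ℝ) (x : ℝ) : ℝ :=
  ∏ b ∈ A.erase a, (x - b) / (a - b)

section Aux
open Polynomial

-- Lemma 1: product over range of a primitive root
lemma prod_range_sub_pow {d : ℕ} (hd : 0 < d) {ξ : ℂ} (hξ : IsPrimitiveRoot ξ d) (y : ℂ) :
    ∏ k ∈ range d, (y - ξ ^ k) = y ^ d - 1 := by
  have himg : nthRootsFinset d (1 : ℂ) = (range d).image (ξ ^ ·) := by
    refine (Finset.eq_of_subset_of_card_le ?_ ?_).symm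
    · intro x hx
      simp only [Finset.mem_image, Finset.mem_range] at hx
      obtain ⟨k, hk, rfl⟩ := hx
      rw [Polynomial.mem_nthRootsFinset hd, ← pow_mul, mul_comm, pow_mul, hξ.pow_eq_one, one_pow]
    · rw [hξ.card_nthRootsFinset, Finset.card_image_of_injOn]
      · simp
      · intro a ha b hb hab
        exact hξ.injOn_pow (by simpa using ha) (by simpa using hb) hab
  have := Polynomial.X_pow_sub_one_eq_prod hd hξ
  have h2 := congrArg (Polynomial.eval y) this
  simp only [eval_sub, eval_pow, eval_X, eval_one, eval_prod, eval_C, himg] at h2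
  rw [h2, Finset.prod_image]
  intro a ha b hb hab
  exact hξ.injOn_pow (by simpa using ha) (by simpa using hb) hab

-- Lemma 2: scaled version
lemma prod_range_sub_mul_pow {d : ℕ} (hd : 0 < d) {ξ : ℂ} (hξ : IsPrimitiveRoot ξ d)
    {w : ℂ} (hw : w ≠ 0) (y : ℂ) :
    ∏ k ∈ range d, (y - w * ξ ^ k) = y ^ d - w ^ d := by
  have h := prod_range_sub_pow hd hξ (y / w)
  have : ∏ k ∈ range d, (y - w * ξ ^ k) = ∏ k ∈ range d, (w * (y / w - ξ ^ k)) := by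
    refine Finset.prod_congr rfl fun k _ => ?_
    field_simp
  rw [this, Finset.prod_mul_distrib, Finset.prod_const, h, Finset.card_range]
  rw [div_pow, mul_sub, mul_div_cancel₀ _ (pow_ne_zero d hw), mul_one]

-- Lemma 3: erased product value
lemma prod_erase_sub {d : ℕ} (hd : 0 < d) {ξ : ℂ} (hξ : IsPrimitiveRoot ξ d)
    {w : ℂ} (hw : w ≠ 0) {j : ℕ} (hj : j < d) :
    ∏ k ∈ (range d).erase j, (w * ξ ^ j - w * ξ ^ k) = d * (w * ξ ^ j) ^ (d - 1) := by
  set a := w * ξ ^ j with ha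
  have hkey : ∀ z : ℂ, (z - a) * ∏ k ∈ (range d).erase j, (z - w * ξ ^ k)
      = (z - a) * ∑ i ∈ range d, z ^ i * a ^ (d - 1 - i) := by
    intro z
    have h1 : (z - a) * ∏ k ∈ (range d).erase j, (z - w * ξ ^ k)
        = ∏ k ∈ range d, (z - w * ξ ^ k) := by
      rw [ha, Finset.mul_prod_erase (range d) (fun k => z - w * ξ ^ k) (Finset.mem_range.mpr hj)]
    have had : a ^ d = w ^ d := by
      rw [ha, mul_pow, ← pow_mul, mul_comm j d, pow_mul, hξ.pow_eq_one, one_pow, mul_one]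
    rw [h1, prod_range_sub_mul_pow hd hξ hw, ← had, ← geom_sum₂_mul z a d]
    ring
  have heq : ∀ z : ℂ, z ≠ a → ∏ k ∈ (range d).erase j, (z - w * ξ ^ k)
      = ∑ i ∈ range d, z ^ i * a ^ (d - 1 - i) := fun z hz =>
    mul_left_cancel₀ (sub_ne_zero.mpr hz) (hkey z)
  have hcont1 : Continuous fun z : ℂ => ∏ k ∈ (range d).erase j, (z - w * ξ ^ k) :=
    continuous_finset_prod _ fun k _ => by continuity
  have hcont2 : Continuous fun z : ℂ => ∑ i ∈ range d, z ^ i * a ^ (d - 1 - i) :=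
    continuous_finset_sum _ fun i _ => by continuity
  have hEq : (fun z : ℂ => ∏ k ∈ (range d).erase j, (z - w * ξ ^ k))
      = fun z => ∑ i ∈ range d, z ^ i * a ^ (d - 1 - i) :=
    Continuous.ext_on (dense_compl_singleton a) hcont1 hcont2 fun z hz => heq z hz
  have := congrFun hEq a
  rw [this]
  have : ∀ i ∈ range d, a ^ i * a ^ (d - 1 - i) = a ^ (d - 1) := by
    intro i hi
    rw [← pow_add]
    congr 1
    have := Finset.mem_range.mp hi
    omega
  rw [Finset.sum_congr rfl this, Finset.sum_const, Finset.card_range, nsmul_eq_mul]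

noncomputable def ee (r : ℝ) : ℂ := Complex.exp (r * Complex.I)

lemma ee_ne (r : ℝ) : ee r ≠ 0 := Complex.exp_ne_zero _

lemma ee_mul (r s : ℝ) : ee r * ee s = ee (r + s) := by
  rw [ee, ee, ee, ← Complex.exp_add]; push_cast; ring_nf

lemma ee_mul_neg (r : ℝ) : ee r * ee (-r) = 1 := by
  rw [ee_mul, add_neg_cancel, ee, Complex.ofReal_zero, zero_mul, Complex.exp_zero]

lemma ee_pow (r : ℝ) (n : ℕ) : ee r ^ n = ee (n * r) := by
  rw [ee, ee, ← Complex.exp_nat_mul]; push_cast; ring_nf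

lemma ee_add_neg (r : ℝ) : ee r + ee (-r) = 2 * Real.cos r := by
  rw [ee, ee, Complex.exp_mul_I, Complex.exp_mul_I]
  push_cast
  rw [Complex.cos_neg, Complex.sin_neg, ← Complex.ofReal_cos, ← Complex.ofReal_sin]
  ring

lemma ee_sub_neg (r : ℝ) : ee r - ee (-r) = 2 * Complex.I * Real.sin r := by
  rw [ee, ee, Complex.exp_mul_I, Complex.exp_mul_I]
  push_cast
  rw [Complex.cos_neg, Complex.sin_neg, ← Complex.ofReal_cos, ← Complex.ofReal_sin]
  ring

lemma cos_pair (τ ρ : ℝ) :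
    ((Real.cos τ - Real.cos ρ : ℝ) : ℂ) = (ee τ - ee ρ) * (ee τ - ee (-ρ)) / (2 * ee τ) := by
  have h1 := ee_mul_neg τ
  have h2 := ee_mul_neg ρ
  have ha := ee_add_neg τ
  have hb := ee_add_neg ρ
  have hcτ : (Real.cos τ : ℂ) = (ee τ + ee (-τ)) / 2 := by
    rw [eq_div_iff (two_ne_zero (α := ℂ))]; linear_combination -ha
  have hcρ : (Real.cos ρ : ℂ) = (ee ρ + ee (-ρ)) / 2 := by
    rw [eq_div_iff (two_ne_zero (α := ℂ))]; linear_combination -hb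
  rw [Complex.ofReal_sub, hcτ, hcρ, eq_div_iff (by simp [ee_ne])]
  linear_combination h1 - h2

lemma ee_inv (r : ℝ) : (ee r)⁻¹ = ee (-r) := inv_eq_of_mul_eq_one_right (ee_mul_neg r)

lemma prod_cos_sub {d : ℕ} (hd : 0 < d) (β τ : ℝ) :
    ∏ k ∈ range d, (Real.cos τ - Real.cos (β + 2 * k * π / d)) =
      (Real.cos (d * τ) - Real.cos (d * β)) / 2 ^ (d - 1) := by
  have hdR : (d : ℝ) ≠ 0 := Nat.cast_ne_zero.mpr hd.ne'
  set ζ : ℂ := Complex.exp (2 * ↑π * Complex.I / ↑d) with hζdef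
  have hξ : IsPrimitiveRoot ζ d := Complex.isPrimitiveRoot_exp d hd.ne'
  have hζe : ζ = ee (2 * π / d) := by rw [ee, hζdef]; congr 1; push_cast; ring
  have hk : ∀ k : ℕ, ee β * ζ ^ k = ee (β + 2 * k * π / d) := by
    intro k; rw [hζe, ee_pow, ee_mul]; congr 1; field_simp
  have hkinv : ∀ k : ℕ, ee (-β) * (ζ⁻¹) ^ k = ee (-(β + 2 * k * π / d)) := by
    intro k; rw [hζe, ee_inv, ee_pow, ee_mul]; congr 1; field_simp; ring
  rw [← Complex.ofReal_inj, Complex.ofReal_prod]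
  have hstep : ∀ k ∈ range d, ((Real.cos τ - Real.cos (β + 2 * k * π / d) : ℝ) : ℂ)
      = (ee τ - ee β * ζ ^ k) * (ee τ - ee (-β) * (ζ⁻¹) ^ k) / (2 * ee τ) := by
    intro k _
    rw [cos_pair, hk, hkinv]
  rw [Finset.prod_congr rfl hstep, Finset.prod_div_distrib, Finset.prod_mul_distrib,
    prod_range_sub_mul_pow hd hξ (ee_ne β) (ee τ),
    prod_range_sub_mul_pow hd hξ.inv (ee_ne (-β)) (ee τ),
    Finset.prod_const, Finset.card_range]
  rw [ee_pow, ee_pow, ee_pow]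
  set E := ee (↑d * τ) with hE
  set B := ee (↑d * β) with hB
  have hdb : ee (↑d * -β) = ee (-(↑d * β)) := by congr 1; ring
  rw [hdb]
  have h1 : E * ee (-(↑d * τ)) = 1 := ee_mul_neg _
  have h2 : B * ee (-(↑d * β)) = 1 := ee_mul_neg _
  have ha : E + ee (-(↑d * τ)) = 2 * (Real.cos (↑d * τ) : ℂ) := ee_add_neg _
  have hb : B + ee (-(↑d * β)) = 2 * (Real.cos (↑d * β) : ℂ) := ee_add_neg _
  have hp : (2 : ℂ) ^ d = 2 ^ (d - 1) * 2 := by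
    rw [← pow_succ]; congr 1; omega
  rw [Complex.ofReal_div, Complex.ofReal_sub, Complex.ofReal_pow, Complex.ofReal_ofNat]
  rw [mul_pow, ee_pow, div_eq_div_iff (by simp [ee_ne, hE]) (pow_ne_zero _ two_ne_zero)]
  linear_combination (2:ℂ)^(d-1) * h2 - 2^(d-1) * h1 + 2^(d-1) * E * ha - 2^(d-1) * E * hb
    - ((Real.cos (↑d*τ) : ℝ) - (Real.cos (↑d*β) : ℝ) : ℂ) * E * hp

lemma prod_cos_sub_erase {d : ℕ} (hd : 0 < d) (β : ℝ) {j : ℕ} (hj : j < d)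
    (hsj : Real.sin (β + 2 * j * π / d) ≠ 0) :
    ∏ k ∈ (range d).erase j,
        (Real.cos (β + 2 * j * π / d) - Real.cos (β + 2 * k * π / d)) =
      d * Real.sin (d * β) / (Real.sin (β + 2 * j * π / d) * 2 ^ (d - 1)) := by
  have hdR : (d : ℝ) ≠ 0 := Nat.cast_ne_zero.mpr hd.ne'
  set ζ : ℂ := Complex.exp (2 * ↑π * Complex.I / ↑d) with hζdef
  have hξ : IsPrimitiveRoot ζ d := Complex.isPrimitiveRoot_exp d hd.ne'
  have hζe : ζ = ee (2 * π / d) := by rw [ee, hζdef]; congr 1; push_cast; ring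
  have hζne : ζ ≠ 0 := by rw [hζe]; exact ee_ne _
  have hk : ∀ k : ℕ, ee β * ζ ^ k = ee (β + 2 * k * π / d) := by
    intro k; rw [hζe, ee_pow, ee_mul]; congr 1; field_simp
  have hkinv : ∀ k : ℕ, ee (-β) * (ζ⁻¹) ^ k = ee (-(β + 2 * k * π / d)) := by
    intro k; rw [hζe, ee_inv, ee_pow, ee_mul]; congr 1; field_simp; ring
  rw [← Complex.ofReal_inj, Complex.ofReal_prod]
  have hstep : ∀ k ∈ (range d).erase j,
      ((Real.cos (β + 2 * j * π / d) - Real.cos (β + 2 * k * π / d) : ℝ) : ℂ)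
      = (ee β * ζ ^ j - ee β * ζ ^ k) * (ee β * ζ ^ j - ee (-β) * (ζ⁻¹) ^ k)
        / (2 * (ee β * ζ ^ j)) := by
    intro k _
    rw [cos_pair, ← hk j, ← hk k, ← hkinv k]
  rw [Finset.prod_congr rfl hstep, Finset.prod_div_distrib, Finset.prod_mul_distrib,
    prod_erase_sub hd hξ (ee_ne β) hj, Finset.prod_const,
    Finset.card_erase_of_mem (Finset.mem_range.mpr hj), Finset.card_range]
  have hjfac : ee β * ζ ^ j - ee (-β) * (ζ⁻¹) ^ j = 2 * Complex.I * (Real.sin (β + 2 * j * π / d) : ℂ) := by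
    rw [hk j, hkinv j, ee_sub_neg]
  have hne : ee β * ζ ^ j - ee (-β) * (ζ⁻¹) ^ j ≠ 0 := by
    rw [hjfac]
    exact mul_ne_zero (mul_ne_zero two_ne_zero Complex.I_ne_zero) (Complex.ofReal_ne_zero.mpr hsj)
  have hu : (ee β * ζ ^ j) ^ d = ee (↑d * β) := by
    rw [mul_pow, ee_pow, ← pow_mul, mul_comm j d, pow_mul, hξ.pow_eq_one, one_pow, mul_one]
  have hv : ee (-β) ^ d = ee (-(↑d * β)) := by rw [ee_pow]; congr 1; ring
  have hsec : ∏ k ∈ (range d).erase j, (ee β * ζ ^ j - ee (-β) * (ζ⁻¹) ^ k)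
      = (ee (↑d * β) - ee (-(↑d * β))) / (ee β * ζ ^ j - ee (-β) * (ζ⁻¹) ^ j) := by
    rw [eq_div_iff hne, mul_comm,
      Finset.mul_prod_erase (range d) (fun k => ee β * ζ ^ j - ee (-β) * (ζ⁻¹) ^ k)
        (Finset.mem_range.mpr hj),
      prod_range_sub_mul_pow hd hξ.inv (ee_ne (-β)) (ee β * ζ ^ j), hu, hv]
  rw [hsec, hjfac, ee_sub_neg]
  have h2I : (2 : ℂ) * Complex.I ≠ 0 := mul_ne_zero two_ne_zero Complex.I_ne_zero
  have hune : ee β * ζ ^ j ≠ 0 := mul_ne_zero (ee_ne β) (pow_ne_zero _ hζne)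
  set u : ℂ := ee β * ζ ^ j with hudef
  rw [mul_div_mul_left _ _ h2I, mul_pow 2 u]
  have hBne : ((Real.sin (β + 2 * ↑j * π / ↑d) : ℝ) : ℂ) ≠ 0 := Complex.ofReal_ne_zero.mpr hsj
  rw [Complex.ofReal_div, Complex.ofReal_mul, Complex.ofReal_mul, Complex.ofReal_pow,
    Complex.ofReal_natCast, Complex.ofReal_ofNat, hudef]
  field_simp
  have hdC : (d:ℂ) ≠ 0 := Nat.cast_ne_zero.mpr hd.ne'
  have harg : (((β:ℂ) * ↑d + 2*↑j*↑π)/↑d) = ((β + 2*j*π/d : ℝ) : ℂ) := by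
    push_cast
    field_simp [hdC]
  have hB' : Complex.sin (((β:ℂ) * ↑d + 2*↑j*↑π)/↑d) ≠ 0 := by
    rw [harg, ← Complex.ofReal_sin]
    exact Complex.ofReal_ne_zero.mpr hsj
  have hU' : (ee β * ζ ^ j) ^ (d-1) ≠ 0 :=
    pow_ne_zero _ (mul_ne_zero (ee_ne β) (pow_ne_zero _ hζne))
  have h2p : ((2:ℂ)) ^ (d-1) ≠ 0 := pow_ne_zero _ two_ne_zero
  rw [mul_comm (d:ℂ) ((ee β * ζ ^ j) ^ (d-1)), mul_assoc, mul_div_mul_left _ _ hU']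

lemma sin_node_ne {d : ℕ} (hd : 0 < d) {β : ℝ} (hβ : Real.sin (d * β) ≠ 0) (j : ℕ) :
    Real.sin (β + 2 * j * π / d) ≠ 0 := by
  intro h
  obtain ⟨m, hm⟩ := Real.sin_eq_zero_iff.mp h
  apply hβ
  have hdR : (d : ℝ) ≠ 0 := Nat.cast_ne_zero.mpr hd.ne'
  have hβ' : β = m * π - 2 * j * π / d := by linarith
  rw [hβ']
  have harg : (d : ℝ) * (m * π - 2 * j * π / d) = ((m * d - 2 * j : ℤ) : ℝ) * π := by
    push_cast
    field_simp
  rw [harg, Real.sin_int_mul_pi]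

lemma node_inj {d : ℕ} (hd : 0 < d) {β : ℝ} (hβ : Real.sin (d * β) ≠ 0) :
    ∀ a ∈ range d, ∀ b ∈ range d,
      Real.cos (β + 2 * a * π / d) = Real.cos (β + 2 * b * π / d) → a = b := by
  intro a ha b hb hab
  rw [Finset.mem_range] at ha hb
  have hdR : (d : ℝ) ≠ 0 := Nat.cast_ne_zero.mpr hd.ne'
  rcases Real.cos_eq_cos_iff.mp hab with ⟨n, h | h⟩
  · have key : ((b : ℝ) - (n * d + a)) * (2 * π) = 0 := by
      field_simp at h
      nlinarith [h, Real.pi_ne_zero]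
    have h0 : (b : ℝ) - (n * d + a) = 0 := by
      rcases mul_eq_zero.mp key with h' | h'
      · exact h'
      · exact absurd h' (by positivity)
    have hz : (b : ℤ) = n * d + a := by exact_mod_cast (by linarith : (b : ℝ) = n * d + a)
    have hdvd : (d : ℤ) ∣ (b - a : ℤ) := ⟨n, by rw [hz]; ring⟩
    have hba : (b - a : ℤ) = 0 := Int.eq_zero_of_abs_lt_dvd hdvd (by
      rw [abs_lt]; constructor <;> [omega; omega])
    omega
  · exfalso
    apply hβ
    have key : (d : ℝ) * β = ((n * d - a - b : ℤ) : ℝ) * π := by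
      field_simp at h
      push_cast
      linear_combination h / 2
    rw [key, Real.sin_int_mul_pi]

set_option maxHeartbeats 1000000 in
theorem lagBasis_modCheb_formula' (d : ℕ) (hd : 1 ≤ d) (β : ℝ)
    (hβ : Real.sin (d * β) ≠ 0) (j : ℕ) (hj : j < d) (t : ℝ)
    (h1 : Real.sin ((t + (β + 2 * j * π / d)) / 2) ≠ 0)
    (h2 : Real.sin ((t - (β + 2 * j * π / d)) / 2) ≠ 0) :
    (∏ b ∈ ((Finset.range d).image (fun k : ℕ => Real.cos (β + 2 * k * π / d))).erase
        (Real.cos (β + 2 * j * π / d)),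
      (Real.cos t - b) / (Real.cos (β + 2 * j * π / d) - b)) =
      (Real.sin (β + 2 * j * π / d) / (d * Real.sin (d * β))) *
        (Real.sin (d * (t + β) / 2) * Real.sin (d * (t - β) / 2)) /
        (Real.sin ((t + (β + 2 * j * π / d)) / 2) *
          Real.sin ((t - (β + 2 * j * π / d)) / 2)) := by
  have hd0 : 0 < d := hd
  have hdR : (d : ℝ) ≠ 0 := Nat.cast_ne_zero.mpr hd0.ne'
  have hsj := sin_node_ne hd0 hβ j
  have hinj := node_inj hd0 hβ
  have himg : ((Finset.range d).image (fun k : ℕ => Real.cos (β + 2 * k * π / d))).erase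
      (Real.cos (β + 2 * j * π / d)) =
      ((range d).erase j).image (fun k : ℕ => Real.cos (β + 2 * k * π / d)) := by
    ext x
    simp only [Finset.mem_erase, Finset.mem_image, Finset.mem_range]
    constructor
    · rintro ⟨hne, ⟨k, hk, rfl⟩⟩
      exact ⟨k, ⟨fun hkj => hne (by rw [hkj]), hk⟩, rfl⟩
    · rintro ⟨k, ⟨hkj, hk⟩, rfl⟩
      exact ⟨fun hc => hkj (hinj k (Finset.mem_range.mpr hk) j (Finset.mem_range.mpr hj) hc),
        k, hk, rfl⟩
  rw [himg, Finset.prod_image (fun x hx y hy h =>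
    hinj x (Finset.mem_of_mem_erase hx) y (Finset.mem_of_mem_erase hy) h)]
  rw [Finset.prod_div_distrib, prod_cos_sub_erase hd0 β hj hsj]
  have hne0 : Real.cos t - Real.cos (β + 2 * j * π / d) ≠ 0 := by
    rw [Real.cos_sub_cos]
    exact mul_ne_zero (mul_ne_zero (by norm_num) h1) h2
  have hnum : ∏ k ∈ (range d).erase j, (Real.cos t - Real.cos (β + 2 * k * π / d)) =
      ((Real.cos (d * t) - Real.cos (d * β)) / 2 ^ (d - 1)) /
        (Real.cos t - Real.cos (β + 2 * j * π / d)) := by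
    rw [eq_div_iff hne0, mul_comm,
      Finset.mul_prod_erase (range d)
        (fun k => Real.cos t - Real.cos (β + 2 * k * π / d)) (Finset.mem_range.mpr hj),
      prod_cos_sub hd0 β t]
  rw [hnum, Real.cos_sub_cos (d * t) (d * β), Real.cos_sub_cos t (β + 2 * j * π / d)]
  have e1 : (d * t + d * β) / 2 = d * (t + β) / 2 := by ring
  have e2 : (d * t - d * β) / 2 = d * (t - β) / 2 := by ring
  rw [e1, e2]
  have h2p : (2 : ℝ) ^ (d - 1) ≠ 0 := pow_ne_zero _ two_ne_zero
  set s1 := Real.sin (d * (t + β) / 2) with hs1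
  set s2 := Real.sin (d * (t - β) / 2) with hs2
  set s3 := Real.sin ((t + (β + 2 * j * π / d)) / 2) with hs3
  set s4 := Real.sin ((t - (β + 2 * j * π / d)) / 2) with hs4
  set s5 := Real.sin (β + 2 * j * π / d) with hs5
  set s6 := Real.sin (d * β) with hs6
  field_simp

end Aux

theorem lagBasis_modCheb_formula (d : ℕ) (hd : 1 ≤ d) (β : ℝ)
    (hβ : Real.sin (d * β) ≠ 0) (j : ℕ) (hj : j < d) (t : ℝ)
    (h1 : Real.sin ((t + (β + 2 * j * π / d)) / 2) ≠ 0)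
    (h2 : Real.sin ((t - (β + 2 * j * π / d)) / 2) ≠ 0) :
    lagBasis (modCheb d β) (Real.cos (β + 2 * j * π / d)) (Real.cos t) =
      (Real.sin (β + 2 * j * π / d) / (d * Real.sin (d * β))) *
        (Real.sin (d * (t + β) / 2) * Real.sin (d * (t - β) / 2)) /
        (Real.sin ((t + (β + 2 * j * π / d)) / 2) *
          Real.sin ((t - (β + 2 * j * π / d)) / 2)) := by
  rw [lagBasis, modCheb]
  exact lagBasis_modCheb_formula' d hd β hβ j hj t h1 h2
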